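/- For every positive integer M, the ratio h((1 − (1−2ε)^M)/2)/h(ε) tends to M as ε tends to 0 from the right; that is, the upper bound M on lim_{ε→0⁺} h(ε_M)/h(ε) is achieved. -/

import Mathlib

open Real Filter

-- (log x)⁻¹ → 0 as x → 0⁺
lemma aux_inv_log : Tendsto (fun x : ℝ => (log x)⁻¹) (nhdsWithin 0 (Set.Ioi 0)) (nhds 0) := by
  have h1 : Tendsto (fun x : ℝ => -log x) (nhdsWithin 0 (Set.Ioi 0)) atTop :=
    tendsto_neg_atBot_atTop.comp Real.tendsto_log_nhdsGT_zero
  have h2 := h1.inv_tendsto_atTop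
  have h3 : Tendsto (fun x : ℝ => -(-log x)⁻¹) (nhdsWithin 0 (Set.Ioi 0)) (nhds 0) := by
    simpa using h2.neg
  refine h3.congr (fun x => ?_)
  rw [neg_inv, neg_neg]

-- log(1-x)/x → -1
lemma aux_log_one_sub : Tendsto (fun x : ℝ => log (1 - x) / x)
    (nhdsWithin 0 (Set.Ioi 0)) (nhds (-1)) := by
  have hd : HasDerivAt (fun x : ℝ => log (1 - x)) (-1) 0 := by
    have h1 : HasDerivAt (fun x : ℝ => 1 - x) (-1) 0 := by
      simpa using (hasDerivAt_id (0:ℝ)).const_sub 1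
    have := (Real.hasDerivAt_log (by norm_num : (1:ℝ) - 0 ≠ 0)).comp 0 h1
    exact this.congr_deriv (by norm_num)
  have := hasDerivAt_iff_tendsto_slope.mp hd
  have h2 := this.mono_left (nhdsWithin_mono _ (fun x hx => ne_of_gt hx))
  refine h2.congr (fun x => ?_)
  simp [slope_def_field, div_eq_mul_inv, mul_comm]

-- binEntropy x / (-(x * log x)) → 1
lemma aux_entropy_ratio : Tendsto (fun x : ℝ => binEntropy x / (-(x * log x)))
    (nhdsWithin 0 (Set.Ioi 0)) (nhds 1) := by
  have hterm : Tendsto (fun x : ℝ => (1 - x) * (log (1 - x) / x) * (log x)⁻¹)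
      (nhdsWithin 0 (Set.Ioi 0)) (nhds 0) := by
    have t1 : Tendsto (fun x : ℝ => 1 - x) (nhdsWithin 0 (Set.Ioi 0)) (nhds 1) := by
      have h : Continuous (fun x : ℝ => 1 - x) := continuous_const.sub continuous_id
      have := (h.tendsto 0).mono_left (nhdsWithin_le_nhds (s := Set.Ioi 0))
      simpa using this
    have := (t1.mul aux_log_one_sub).mul aux_inv_log
    simpa using this
  have key : Tendsto (fun x : ℝ => 1 + (1 - x) * (log (1 - x) / x) * (log x)⁻¹)
      (nhdsWithin 0 (Set.Ioi 0)) (nhds 1) := by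
    simpa using (tendsto_const_nhds.add hterm)
  refine key.congr' ?_
  filter_upwards [self_mem_nhdsWithin,
    Ioo_mem_nhdsGT_of_mem (by norm_num : (0:ℝ) ∈ Set.Ico 0 1)] with x hx hx1
  have hx0 : (0:ℝ) < x := hx
  have hlt : x < 1 := hx1.2
  have hlog : log x ≠ 0 := ne_of_lt (Real.log_neg hx0 hlt)
  rw [Real.binEntropy, Real.log_inv, Real.log_inv]
  field_simp
  ring

-- f ε / ε → M
lemma aux_slope (M : ℕ) :
    Tendsto (fun ε : ℝ => ((1 - (1 - 2 * ε) ^ M) / 2) / ε)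
      (nhdsWithin 0 (Set.Ioi 0)) (nhds (M : ℝ)) := by
  have hd : HasDerivAt (fun ε : ℝ => (1 - (1 - 2 * ε) ^ M) / 2) (M : ℝ) 0 := by
    have h1 : HasDerivAt (fun ε : ℝ => 1 - 2 * ε) (-2) 0 := by
      simpa using ((hasDerivAt_id (0:ℝ)).const_mul 2).const_sub 1
    have h2 := (hasDerivAt_pow M ((1:ℝ) - 2 * 0)).comp 0 h1
    have h3 : HasDerivAt (fun ε : ℝ => (1 - 2 * ε) ^ M) (-(2 * M)) 0 := by
      refine h2.congr_deriv ?_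
      simp [mul_comm]
    have h4 := (h3.const_sub 1).div_const 2
    refine h4.congr_deriv ?_
    ring
  have := hasDerivAt_iff_tendsto_slope.mp hd
  have h2 := this.mono_left (nhdsWithin_mono _ (fun x hx => ne_of_gt hx))
  refine h2.congr (fun x => ?_)
  simp [slope_def_field, div_eq_mul_inv]

-- log (f ε) / log ε → 1 given f ε / ε → M > 0
lemma aux_log_ratio (M : ℕ) (hM : 0 < M) :
    Tendsto (fun ε : ℝ => log ((1 - (1 - 2 * ε) ^ M) / 2) / log ε)
      (nhdsWithin 0 (Set.Ioi 0)) (nhds 1) := by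
  set f : ℝ → ℝ := fun ε => (1 - (1 - 2 * ε) ^ M) / 2 with hf
  have hslope := aux_slope M
  have hpos : ∀ᶠ ε in nhdsWithin (0:ℝ) (Set.Ioi 0), 0 < f ε / ε := by
    have : (0:ℝ) < M := by exact_mod_cast hM
    exact hslope.eventually (eventually_gt_nhds this)
  have hlogM : Tendsto (fun ε : ℝ => log (f ε / ε)) (nhdsWithin 0 (Set.Ioi 0))
      (nhds (log M)) := by
    have hMne : (M:ℝ) ≠ 0 := by positivity
    exact ((Real.continuousAt_log hMne).tendsto).comp hslope
  have hsmall : Tendsto (fun ε : ℝ => log (f ε / ε) * (log ε)⁻¹)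
      (nhdsWithin 0 (Set.Ioi 0)) (nhds 0) := by
    simpa using hlogM.mul aux_inv_log
  have key : Tendsto (fun ε : ℝ => log (f ε / ε) * (log ε)⁻¹ + 1)
      (nhdsWithin 0 (Set.Ioi 0)) (nhds 1) := by
    simpa using hsmall.add tendsto_const_nhds
  refine key.congr' ?_
  filter_upwards [self_mem_nhdsWithin, hpos,
    Ioo_mem_nhdsGT_of_mem (by norm_num : (0:ℝ) ∈ Set.Ico 0 1)] with ε hε hfε hε1
  have hε0 : (0:ℝ) < ε := hε
  have hlog : log ε ≠ 0 := ne_of_lt (Real.log_neg hε0 hε1.2)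
  have hfpos : 0 < f ε := by
    have := mul_pos hfε hε0
    rwa [div_mul_cancel₀ _ (ne_of_gt hε0)] at this
  rw [Real.log_div (ne_of_gt hfpos) (ne_of_gt hε0)]
  field_simp
  simp only [hf]
  ring

/-- For every positive integer `M`, the ratio `h((1 − (1−2ε)^M)/2)/h(ε)` tends to `M` as
`ε → 0⁺`: the upper bound `M` on the entropy ratio is achieved in the limit. -/
theorem binEntropy_parity_ratio_tendsto (M : ℕ) (hM : 0 < M) :
    Tendsto (fun ε : ℝ => binEntropy ((1 - (1 - 2 * ε) ^ M) / 2) / binEntropy ε)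
      (nhdsWithin 0 (Set.Ioi 0)) (nhds (M : ℝ)) := by
  set f : ℝ → ℝ := fun ε => (1 - (1 - 2 * ε) ^ M) / 2 with hf
  have hbound : ∀ᶠ ε in nhdsWithin (0:ℝ) (Set.Ioi 0),
      ε ∈ Set.Ioo (0:ℝ) (1/2) :=
    Ioo_mem_nhdsGT_of_mem (by norm_num : (0:ℝ) ∈ Set.Ico 0 (1/2))
  have hfIoo : ∀ ε : ℝ, ε ∈ Set.Ioo (0:ℝ) (1/2) → f ε ∈ Set.Ioo (0:ℝ) (1/2) := by
    intro ε hε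
    have h1 : 0 < 1 - 2 * ε := by linarith [hε.2]
    have h2 : 1 - 2 * ε < 1 := by linarith [hε.1]
    have hp1 : (1 - 2 * ε) ^ M < 1 := pow_lt_one₀ h1.le h2 hM.ne'
    have hp0 : 0 < (1 - 2 * ε) ^ M := pow_pos h1 M
    constructor <;> simp only [hf] <;> nlinarith
  -- f tends to 0 within Ioi 0
  have hfto : Tendsto f (nhdsWithin 0 (Set.Ioi 0)) (nhdsWithin 0 (Set.Ioi 0)) := by
    rw [tendsto_nhdsWithin_iff]
    constructor
    · have hc : Continuous f := by
        simpa [hf] using (((continuous_const.sub ((continuous_pow M).comp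
          (continuous_const.sub (continuous_const.mul continuous_id)))).div_const 2))
      have := (hc.tendsto 0).mono_left (nhdsWithin_le_nhds (s := Set.Ioi (0:ℝ)))
      simpa [hf] using this
    · filter_upwards [hbound] with ε hε
      exact (hfIoo ε hε).1
  have hA := aux_entropy_ratio.comp hfto
  have hD := aux_entropy_ratio.inv₀ one_ne_zero
  have hB := aux_slope M
  have hC := aux_log_ratio M hM
  have hprod := ((hA.mul hB).mul hC).mul hD
  have hlim : (1 * (M:ℝ) * 1 * 1⁻¹) = (M:ℝ) := by norm_num
  rw [hlim] at hprod
  refine hprod.congr' ?_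
  filter_upwards [hbound] with ε hε
  have hfm := hfIoo ε hε
  have hε0 : (0:ℝ) < ε := hε.1
  have hεlog : log ε ≠ 0 := ne_of_lt (Real.log_neg hε0 (by linarith [hε.2]))
  have hflog : log (f ε) ≠ 0 := ne_of_lt (Real.log_neg hfm.1 (by linarith [hfm.2]))
  have hbe : binEntropy ε ≠ 0 := (Real.binEntropy_pos hε0 (by linarith [hε.2])).ne'
  have hfne : f ε ≠ 0 := hfm.1.ne'
  simp only [Function.comp]
  field_simp
  ring
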